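/- If P(lim_{|k|→∞} ‖Y_k‖ = 0) = 1, then ϑ := P(sup_{j≥1} ‖Y_j‖ ≤ 1) > 0. -/
import Mathlib


open MeasureTheory ProbabilityTheory Set Filter
open scoped ENNReal NNReal Topology

noncomputable section

/-- The iterated backshift operator: `(B^k x) j = x (j - k)`. -/
def backshift {V : Type*} (k : ℤ) (x : ℤ → V) : ℤ → V := fun j => x (j - k)

lemma measurable_backshift {V : Type*} [MeasurableSpace V] (k : ℤ) :
    Measurable (backshift (V := V) k) :=
  measurable_pi_lambda _ fun j => measurable_pi_apply (j - k)

lemma backshift_comp {V : Type*} (a b : ℤ) :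
    backshift (V := V) a ∘ backshift b = backshift (a + b) := by
  funext x j
  simp only [Function.comp, backshift]
  congr 1
  omega

lemma map_backshift_neg_nat {V : Type*} [MeasurableSpace V]
    (ν : Measure (ℤ → V)) (hνshift : ν.map (backshift 1) = ν) (k : ℕ) :
    ν.map (backshift (-(k : ℤ))) = ν := by
  have hid : backshift (V := V) 0 = id := by
    funext x j; simp [backshift]
  have hm1 : ν.map (backshift (-1 : ℤ)) = ν := by
    calc ν.map (backshift (-1 : ℤ))
        = (ν.map (backshift 1)).map (backshift (-1 : ℤ)) := by rw [hνshift]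
      _ = ν.map (backshift (-1 : ℤ) ∘ backshift 1) :=
          Measure.map_map (measurable_backshift _) (measurable_backshift _)
      _ = ν.map id := by rw [backshift_comp]; norm_num [hid]
      _ = ν := Measure.map_id
  induction k with
  | zero =>
    rw [Nat.cast_zero, neg_zero, hid, Measure.map_id]
  | succ n ih =>
    have : (-(↑(n + 1) : ℤ)) = (-1 : ℤ) + (-(n : ℤ)) := by push_cast; ring
    rw [this, ← backshift_comp,
      ← Measure.map_map (measurable_backshift _) (measurable_backshift _), ih, hm1]

/-- **Positivity of the candidate extremal index.**
If `P(lim_{|k|→∞} ‖Y_k‖ = 0) = 1`, then `ϑ := P(sup_{j≥1} ‖Y_j‖ ≤ 1) > 0`. -/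
theorem statement9
    -- `V` plays the role of `ℝ^d` (`d ≥ 1`) equipped with an arbitrary norm
    {V : Type*} [NormedAddCommGroup V] [NormedSpace ℝ V] [FiniteDimensional ℝ V]
    [Nontrivial V] [MeasurableSpace V] [BorelSpace V]
    (α : ℝ) (hα : 0 < α)
    -- the tail measure and its properties
    (ν : Measure (ℤ → V))
    (hν0 : ν {0} = 0)
    (hν1 : ν {y : ℤ → V | 1 < ‖y 0‖} = 1)
    (hνshift : ν.map (backshift 1) = ν)
    (hνhom : ∀ A : Set (ℤ → V), MeasurableSet A → ∀ c : ℝ, 0 < c →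
      ν ((fun x => c • x) '' A) = ENNReal.ofReal (c ^ (-α)) * ν A)
    -- the tail process `Y` and the spectral tail process `Θ`
    {Ω : Type*} [MeasurableSpace Ω] (P : Measure Ω) [IsProbabilityMeasure P]
    (Y : Ω → ℤ → V) (hYmeas : Measurable Y)
    (hYlaw : P.map Y = ν.restrict {y : ℤ → V | 1 < ‖y 0‖})
    (Θ : Ω → ℤ → V) (hΘdef : ∀ ω, Θ ω = ‖Y ω 0‖⁻¹ • Y ω)
    (hPareto : ∀ u : ℝ, 1 ≤ u → P {ω | u < ‖Y ω 0‖} = ENNReal.ofReal (u ^ (-α)))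
    (hindep : IndepFun (fun ω => ‖Y ω 0‖) Θ P)
    (hpolar : ∀ H : (ℤ → V) → ℝ≥0∞, Measurable H →
      ∫⁻ y in {y : ℤ → V | y 0 ≠ 0}, H y ∂ν
        = ∫⁻ r in Ioi (0 : ℝ),
            (∫⁻ ω, H (r • Θ ω) ∂P) * ENNReal.ofReal (α * r ^ (-α - 1)))
    -- the statement
    (hY0 : P {ω | Tendsto (fun k : ℤ => ‖Y ω k‖) cofinite (𝓝 0)} = 1) :
    0 < P {ω | ∀ j : ℤ, 1 ≤ j → ‖Y ω j‖ ≤ 1} := by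
  classical
  set S : Set (ℤ → V) := {y | 1 < ‖y 0‖ ∧ ∀ j : ℤ, 1 ≤ j → ‖y j‖ ≤ 1} with hSdef
  have hSm : MeasurableSet S := by
    have h1 : MeasurableSet {y : ℤ → V | 1 < ‖y 0‖} :=
      measurableSet_lt measurable_const ((measurable_pi_apply 0).norm)
    have h2 : MeasurableSet {y : ℤ → V | ∀ j : ℤ, 1 ≤ j → ‖y j‖ ≤ 1} := by
      have heq : {y : ℤ → V | ∀ j : ℤ, 1 ≤ j → ‖y j‖ ≤ 1}
          = ⋂ j : ℤ, {y : ℤ → V | 1 ≤ j → ‖y j‖ ≤ 1} := by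
        ext y; simp
      rw [heq]
      refine MeasurableSet.iInter fun j => ?_
      by_cases hj : (1 : ℤ) ≤ j
      · simp only [hj, true_implies]
        exact measurableSet_le ((measurable_pi_apply j).norm) measurable_const
      · simp [hj]
    exact h1.inter h2
  have hS_sub : S ⊆ {y : ℤ → V | 1 < ‖y 0‖} := fun y hy => hy.1
  -- it suffices to show 0 < ν S
  suffices hνS : 0 < ν S by
    have hsub : Y ⁻¹' S ⊆ {ω | ∀ j : ℤ, 1 ≤ j → ‖Y ω j‖ ≤ 1} := fun ω h => h.2
    calc (0 : ℝ≥0∞) < ν S := hνS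
      _ = P (Y ⁻¹' S) := by
          rw [← Measure.map_apply hYmeas hSm, hYlaw, Measure.restrict_apply hSm,
            Set.inter_eq_self_of_subset_left hS_sub]
      _ ≤ P {ω | ∀ j : ℤ, 1 ≤ j → ‖Y ω j‖ ≤ 1} := measure_mono hsub
  rw [pos_iff_ne_zero]
  intro h0
  -- the convergence set
  set G : Set (ℤ → V) := {y | Tendsto (fun k : ℤ => ‖y k‖) cofinite (𝓝 0)} with hGdef
  haveI : (Filter.cofinite : Filter ℤ).IsCountablyGenerated := by
    rw [Int.cofinite_eq]; infer_instance
  have hGm : MeasurableSet G :=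
    measurableSet_tendsto (𝓝 (0 : ℝ)) (fun k => (measurable_pi_apply k).norm)
  -- all shifted copies of S are null
  have hA : ∀ k : ℕ, ν (backshift (-(k : ℤ)) ⁻¹' S) = 0 := by
    intro k
    rw [← Measure.map_apply (measurable_backshift _) hSm,
      map_backshift_neg_nat ν hνshift k, h0]
  have hU : ν (⋃ k : ℕ, backshift (-(k : ℤ)) ⁻¹' S) = 0 := measure_iUnion_null hA
  -- the non-convergence part is null
  have hGc : ν (Gᶜ ∩ {y : ℤ → V | 1 < ‖y 0‖}) = 0 := by
    have hPG : P (Y ⁻¹' G) = 1 := hY0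
    have hPGc : P (Y ⁻¹' Gᶜ) = 0 := by
      rw [Set.preimage_compl, measure_compl (hYmeas hGm) (measure_ne_top _ _), hPG,
        measure_univ, tsub_self]
    calc ν (Gᶜ ∩ {y : ℤ → V | 1 < ‖y 0‖})
        = (ν.restrict {y : ℤ → V | 1 < ‖y 0‖}) Gᶜ := by
          rw [Measure.restrict_apply hGm.compl]
      _ = (P.map Y) Gᶜ := by rw [hYlaw]
      _ = P (Y ⁻¹' Gᶜ) := Measure.map_apply hYmeas hGm.compl
      _ = 0 := hPGc
  -- covering
  have hincl : {y : ℤ → V | 1 < ‖y 0‖} ⊆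
      (⋃ k : ℕ, backshift (-(k : ℤ)) ⁻¹' S) ∪ (Gᶜ ∩ {y : ℤ → V | 1 < ‖y 0‖}) := by
    intro y hy
    by_cases hyG : y ∈ G
    · left
      have hev : ∀ᶠ k in cofinite, ‖y k‖ < 1 :=
        hyG.eventually (eventually_lt_nhds one_pos)
      have hF : {j : ℤ | 1 < ‖y j‖}.Finite := by
        refine (Filter.eventually_cofinite.mp hev).subset ?_
        intro j hj
        exact not_lt.mpr (le_of_lt hj)
      have h0F : (0 : ℤ) ∈ {j : ℤ | 1 < ‖y j‖} := hy
      have h0F' : (0 : ℤ) ∈ hF.toFinset := hF.mem_toFinset.mpr h0F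
      set m : ℤ := hF.toFinset.max' ⟨0, h0F'⟩ with hmdef
      have hmF : m ∈ hF.toFinset := hF.toFinset.max'_mem _
      have hmax : ∀ j ∈ hF.toFinset, j ≤ m := fun j hj => hF.toFinset.le_max' j hj
      have hm0 : (0 : ℤ) ≤ m := hmax 0 h0F'
      have htn : (m.toNat : ℤ) = m := Int.toNat_of_nonneg hm0
      refine mem_iUnion.mpr ⟨m.toNat, ?_⟩
      refine ⟨?_, ?_⟩
      · show 1 < ‖y (0 - -(m.toNat : ℤ))‖
        have : (0 : ℤ) - -(m.toNat : ℤ) = m := by omega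
        rw [this]
        exact hF.mem_toFinset.mp hmF
      · intro j hj
        show ‖y (j - -(m.toNat : ℤ))‖ ≤ 1
        by_contra hc
        push_neg at hc
        have hmem : j - -(m.toNat : ℤ) ∈ hF.toFinset := hF.mem_toFinset.mpr hc
        have := hmax _ hmem
        omega
    · right; exact ⟨hyG, hy⟩
  have habs : (1 : ℝ≥0∞) ≤ 0 := by
    calc (1 : ℝ≥0∞) = ν {y : ℤ → V | 1 < ‖y 0‖} := hν1.symm
      _ ≤ ν ((⋃ k : ℕ, backshift (-(k : ℤ)) ⁻¹' S) ∪
            (Gᶜ ∩ {y : ℤ → V | 1 < ‖y 0‖})) := measure_mono hincl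
      _ ≤ ν (⋃ k : ℕ, backshift (-(k : ℤ)) ⁻¹' S) +
            ν (Gᶜ ∩ {y : ℤ → V | 1 < ‖y 0‖}) := measure_union_le _ _
      _ = 0 := by rw [hU, hGc, add_zero]
  exact absurd habs (by simp)
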